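/- Fix m≥1 and set p = 1/2 + √(3^(1/m)-1)/(2√(3^(1/m)+3)). If Y₁,...,Y_m are independent normalized Rademacher variables each with success parameter p, then F = Y₁·...·Y_m satisfies E[F]=0, E[F²]=1 and E[F⁴]=3, yet F takes only finitely many values and hence is not normally distributed. -/

import Mathlib

open MeasureTheory ProbabilityTheory

/-- Integral of a finite product of independent random variables. -/
lemma my_integral_prod {Ω : Type*} [MeasurableSpace Ω] (μ : Measure Ω) [IsProbabilityMeasure μ]
    {ι : Type*} (s : Finset ι) (f : ι → Ω → ℝ)
    (hindep : iIndepFun f μ) (hmeas : ∀ i, Measurable (f i)) :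
    (∫ ω, ∏ i ∈ s, f i ω ∂μ) = ∏ i ∈ s, ∫ ω, f i ω ∂μ := by
  classical
  induction s using Finset.cons_induction with
  | empty => simp
  | cons a s ha ih =>
    have hI : IndepFun (∏ j ∈ s, f j) (f a) μ :=
      hindep.indepFun_finsetProd_of_notMem hmeas ha
    have h1 : (∫ ω, ∏ i ∈ Finset.cons a s ha, f i ω ∂μ)
        = ∫ ω, (∏ j ∈ s, f j) ω * f a ω ∂μ := by
      refine integral_congr_ae (Filter.Eventually.of_forall fun ω => ?_)
      simp [Finset.prod_insert ha, Finset.prod_apply, mul_comm]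
    have hsm : AEStronglyMeasurable (∏ j ∈ s, f j) μ := by
      have h2 : (∏ j ∈ s, f j) = fun ω => ∏ j ∈ s, f j ω := by
        funext ω; simp
      rw [h2]
      exact (Finset.measurable_prod s fun i _ => hmeas i).aestronglyMeasurable
    rw [h1, hI.integral_fun_mul_eq_mul_integral hsm (hmeas a).aestronglyMeasurable, Finset.prod_cons, ← ih, mul_comm]
    congr 1
    refine integral_congr_ae (Filter.Eventually.of_forall fun ω => ?_)
    simp

/-- Expectation of a function of a Rademacher-type variable. -/
lemma my_integral_comp {Ω : Type*} [MeasurableSpace Ω] (μ : Measure Ω) [IsProbabilityMeasure μ]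
    {X : Ω → ℝ} (hX : Measurable X) (hval : ∀ ω, X ω = 1 ∨ X ω = -1)
    {p : ℝ} (hp0 : 0 ≤ p) (hp1 : p ≤ 1) (hP : μ {ω | X ω = 1} = ENNReal.ofReal p)
    (g : ℝ → ℝ) : ∫ ω, g (X ω) ∂μ = p * g 1 + (1 - p) * g (-1) := by
  set A : Set Ω := {ω | X ω = 1} with hA
  have hAm : MeasurableSet A := hX (measurableSet_singleton 1)
  have heq : ∀ ω, g (X ω) = A.indicator (fun _ => g 1) ω + Aᶜ.indicator (fun _ => g (-1)) ω := by
    intro ω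
    rcases hval ω with h | h
    · have h1 : ω ∈ A := h
      have h2 : ω ∉ Aᶜ := by simpa using h1
      rw [Set.indicator_of_mem h1, Set.indicator_of_notMem h2, h, add_zero]
    · have h1 : ω ∉ A := by simp only [hA, Set.mem_setOf_eq, h]; norm_num
      have h2 : ω ∈ Aᶜ := h1
      rw [Set.indicator_of_notMem h1, Set.indicator_of_mem h2, h, zero_add]
  have hint1 : Integrable (A.indicator fun _ => g 1) μ :=
    (integrable_const _).indicator hAm
  have hint2 : Integrable (Aᶜ.indicator fun _ => g (-1)) μ :=
    (integrable_const _).indicator hAm.compl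
  rw [integral_congr_ae (Filter.Eventually.of_forall heq), integral_add hint1 hint2,
    integral_indicator_const _ hAm, integral_indicator_const _ hAm.compl]
  have hAc : μ Aᶜ = ENNReal.ofReal (1 - p) := by
    rw [measure_compl hAm (measure_ne_top μ A), hP, measure_univ,
      ← ENNReal.ofReal_one, ← ENNReal.ofReal_sub _ hp0]
  simp only [measureReal_def]
  rw [hP, hAc, ENNReal.toReal_ofReal hp0, ENNReal.toReal_ofReal (by linarith)]
  simp [mul_comm]

theorem stmt3 {Ω : Type*} [MeasurableSpace Ω] (μ : Measure Ω) [IsProbabilityMeasure μ]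
    (m : ℕ) (hm : 1 ≤ m) (p q : ℝ)
    (hp : p = 1 / 2 + Real.sqrt ((3 : ℝ) ^ ((1 : ℝ) / m) - 1) /
      (2 * Real.sqrt ((3 : ℝ) ^ ((1 : ℝ) / m) + 3)))
    (hq : q = 1 - p)
    (X : Fin m → Ω → ℝ) (hXmeas : ∀ i, Measurable (X i))
    (hval : ∀ i ω, X i ω = 1 ∨ X i ω = -1)
    (hP : ∀ i, μ {ω | X i ω = 1} = ENNReal.ofReal p)
    (hindep : iIndepFun X μ)
    (Y : Fin m → Ω → ℝ) (hY : ∀ i ω, Y i ω = (X i ω - p + q) / (2 * Real.sqrt (p * q)))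
    (F : Ω → ℝ) (hF : ∀ ω, F ω = ∏ i, Y i ω) :
    (∫ ω, F ω ∂μ) = 0 ∧ (∫ ω, (F ω) ^ 2 ∂μ) = 1 ∧ (∫ ω, (F ω) ^ 4 ∂μ) = 3 ∧
      (Set.range F).Finite ∧ μ.map F ≠ gaussianReal 0 1 := by
  subst hq
  have hm0 : (m : ℝ) ≠ 0 := Nat.cast_ne_zero.mpr (by omega)
  have hm0' : (0 : ℝ) < (m : ℝ) := by positivity
  set t : ℝ := (3 : ℝ) ^ ((1 : ℝ) / m) with ht
  -- basic bounds on t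
  have ht1 : 1 ≤ t := by
    rw [ht]
    have : (1 : ℝ) = (3 : ℝ) ^ (0 : ℝ) := by simp
    rw [this]
    exact Real.rpow_le_rpow_of_exponent_le (by norm_num) (by positivity)
  have ht0 : (0 : ℝ) < t := lt_of_lt_of_le one_pos ht1
  -- sqrt facts
  have hb0 : 0 < Real.sqrt (t + 3) := Real.sqrt_pos.mpr (by linarith)
  have ha0 : 0 ≤ Real.sqrt (t - 1) := Real.sqrt_nonneg _
  have hsa : Real.sqrt (t - 1) ^ 2 = t - 1 := Real.sq_sqrt (by linarith)
  have hsb : Real.sqrt (t + 3) ^ 2 = t + 3 := Real.sq_sqrt (by linarith)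
  have hab : Real.sqrt (t - 1) < Real.sqrt (t + 3) :=
    Real.sqrt_lt_sqrt (by linarith) (by linarith)
  -- bounds on p, q
  have hp_half : 1 / 2 ≤ p := by
    rw [hp]; nlinarith [div_nonneg ha0 (by positivity : (0:ℝ) ≤ 2 * Real.sqrt (t + 3))]
  have hp1 : p < 1 := by
    rw [hp]
    have : Real.sqrt (t - 1) / (2 * Real.sqrt (t + 3)) < 1 / 2 := by
      rw [div_lt_div_iff₀ (by positivity) (by norm_num)]
      nlinarith
    linarith
  have hp0 : 0 < p := by linarith
  have hq0 : 0 < 1 - p := by linarith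
  -- p * q = 1 / (t + 3)
  have hpq : p * (1 - p) = 1 / (t + 3) := by
    have hq' : 1 - p = 1 / 2 - Real.sqrt (t - 1) / (2 * Real.sqrt (t + 3)) := by
      rw [hp]; ring
    rw [hq', hp]
    have hb : Real.sqrt (t + 3) ≠ 0 := ne_of_gt hb0
    have ht3' : t + 3 ≠ 0 := by linarith
    field_simp
    linear_combination (-(t+3)) * hsa + (t-1) * hsb
  have hpq0 : 0 < p * (1 - p) := mul_pos hp0 hq0
  set r : ℝ := Real.sqrt (p * (1 - p)) with hr
  have hr0 : 0 < r := Real.sqrt_pos.mpr hpq0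
  have hr2 : r ^ 2 = p * (1 - p) := Real.sq_sqrt hpq0.le
  -- measurability of Y
  have hYeq : ∀ i, Y i = (fun x => (x - p + (1 - p)) / (2 * r)) ∘ X i := by
    intro i; funext ω; exact hY i ω
  have hgm : Measurable (fun x : ℝ => (x - p + (1 - p)) / (2 * r)) := by fun_prop
  have hYmeas : ∀ i, Measurable (Y i) := by
    intro i; rw [hYeq i]; exact hgm.comp (hXmeas i)
  have hYindep : iIndepFun Y μ := by
    have h := hindep.comp (fun _ => fun x : ℝ => (x - p + (1 - p)) / (2 * r)) (fun _ => hgm)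
    have : Y = fun i => (fun x : ℝ => (x - p + (1 - p)) / (2 * r)) ∘ X i := funext hYeq
    rw [this]; exact h
  -- moments of each Y i
  have hmom : ∀ (k : ℕ) i, ∫ ω, (Y i ω) ^ k ∂μ
      = p * ((1 - p + (1 - p)) / (2 * r)) ^ k
        + (1 - p) * ((-1 - p + (1 - p)) / (2 * r)) ^ k := by
    intro k i
    have h0 : ∀ ω, (Y i ω) ^ k
        = (fun x : ℝ => ((x - p + (1 - p)) / (2 * r)) ^ k) (X i ω) := by
      intro ω; rw [hY i ω]
    rw [integral_congr_ae (Filter.Eventually.of_forall h0)]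
    simpa using my_integral_comp μ (hXmeas i) (hval i) hp0.le hp1.le (hP i)
      (fun x : ℝ => ((x - p + (1 - p)) / (2 * r)) ^ k)
  have ht3 : (p * (1 - p)) * (t + 3) = 1 := by
    rw [hpq]; field_simp
  have hEY : ∀ i, ∫ ω, Y i ω ∂μ = 0 := by
    intro i
    have hc : ∀ ω, Y i ω = (Y i ω) ^ 1 := fun ω => (pow_one _).symm
    rw [integral_congr_ae (Filter.Eventually.of_forall hc), hmom 1 i]
    field_simp
    ring
  have hEY2 : ∀ i, ∫ ω, (Y i ω) ^ 2 ∂μ = 1 := by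
    intro i
    rw [hmom 2 i]
    field_simp
    nlinarith [hr2]
  have hEY4 : ∀ i, ∫ ω, (Y i ω) ^ 4 ∂μ = t := by
    intro i
    rw [hmom 4 i]
    field_simp
    linear_combination (-16*(p*(1-p))) * ht3 - 16*t*(r^2 + p*(1-p)) * hr2

  -- first moment of F
  have h1 : (∫ ω, F ω ∂μ) = 0 := by
    have : ∀ ω, F ω = ∏ i ∈ Finset.univ, Y i ω := fun ω => hF ω
    rw [integral_congr_ae (Filter.Eventually.of_forall this),
      my_integral_prod μ Finset.univ Y hYindep hYmeas]
    have hne : (Finset.univ : Finset (Fin m)).Nonempty := by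
      haveI : NeZero m := ⟨by omega⟩
      exact Finset.univ_nonempty
    obtain ⟨i, hi⟩ := hne
    exact Finset.prod_eq_zero hi (hEY i)
  -- second moment
  have hY2indep : iIndepFun (fun i ω => (Y i ω) ^ 2) μ :=
    hYindep.comp (fun _ => fun x : ℝ => x ^ 2) (fun _ => by fun_prop)
  have hY4indep : iIndepFun (fun i ω => (Y i ω) ^ 4) μ :=
    hYindep.comp (fun _ => fun x : ℝ => x ^ 4) (fun _ => by fun_prop)
  have h2 : (∫ ω, (F ω) ^ 2 ∂μ) = 1 := by
    have : ∀ ω, (F ω) ^ 2 = ∏ i ∈ Finset.univ, (Y i ω) ^ 2 := by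
      intro ω; rw [hF ω, ← Finset.prod_pow]
    rw [integral_congr_ae (Filter.Eventually.of_forall this),
      my_integral_prod μ Finset.univ (fun i ω => (Y i ω) ^ 2) hY2indep
        (fun i => (hYmeas i).pow_const 2)]
    simp [hEY2]
  have h4 : (∫ ω, (F ω) ^ 4 ∂μ) = 3 := by
    have : ∀ ω, (F ω) ^ 4 = ∏ i ∈ Finset.univ, (Y i ω) ^ 4 := by
      intro ω; rw [hF ω, ← Finset.prod_pow]
    rw [integral_congr_ae (Filter.Eventually.of_forall this),
      my_integral_prod μ Finset.univ (fun i ω => (Y i ω) ^ 4) hY4indep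
        (fun i => (hYmeas i).pow_const 4)]
    have : ∏ i ∈ Finset.univ, (∫ ω, (Y i ω) ^ 4 ∂μ) = t ^ m := by
      simp [hEY4]
    rw [this, ht, ← Real.rpow_natCast ((3:ℝ) ^ ((1:ℝ)/m)) m,
      ← Real.rpow_mul (by norm_num : (0:ℝ) ≤ 3)]
    rw [one_div, inv_mul_cancel₀ hm0, Real.rpow_one]
  -- finite range
  have hFmeas : Measurable F := by
    have : F = fun ω => ∏ i, Y i ω := funext hF
    rw [this]
    exact Finset.measurable_prod _ fun i _ => hYmeas i
  have hfin : (Set.range F).Finite := by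
    set c1 : ℝ := (1 - p + (1 - p)) / (2 * r)
    set c2 : ℝ := (-1 - p + (1 - p)) / (2 * r)
    have hsub : Set.range F ⊆
        (fun v : Fin m → ℝ => ∏ i, v i) '' (Set.univ.pi fun _ : Fin m => ({c1, c2} : Set ℝ)) := by
      rintro x ⟨ω, rfl⟩
      refine ⟨fun i => Y i ω, fun i _ => ?_, (hF ω).symm⟩
      rcases hval i ω with h | h
      · left
        show Y i ω = c1
        rw [hY i ω, h]
      · right
        show Y i ω ∈ ({c2} : Set ℝ)
        rw [Set.mem_singleton_iff, hY i ω, h]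
    exact ((Set.Finite.pi fun _ => (Set.finite_singleton c2).insert c1).image _).subset hsub
  -- not gaussian
  have hng : μ.map F ≠ gaussianReal 0 1 := by
    intro h
    have hS : MeasurableSet (Set.range F) := hfin.measurableSet
    have h1' : μ.map F (Set.range F) = 1 := by
      rw [Measure.map_apply hFmeas hS]
      rw [Set.preimage_range, measure_univ]
    have h2' : gaussianReal 0 1 (Set.range F) = 0 := by
      have hac := gaussianReal_absolutelyContinuous (0 : ℝ) (one_ne_zero (α := NNReal))
      exact hac (hfin.measure_zero volume)
    rw [h, h2'] at h1'
    exact one_ne_zero h1'.symm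
  exact ⟨h1, h2, h4, hfin, hng⟩
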